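/- If (u,v) is a solution of u'' + u' + λu + cv = 0, v'' + λv + cu = 0 with 0 < |c| < λ along which the energy E = (1/2)(u'² + v'² + λ(u² + v²)) + cuv is constant, then u ≡ 0 and v ≡ 0. -/

import Mathlib

theorem stmt_14 (lam c : ℝ) (hlam : 0 < lam) (hc : 0 < |c|) (hclam : |c| < lam)
    (u v u' v' u'' v'' : ℝ → ℝ)
    (hu : ∀ t, HasDerivAt u (u' t) t) (hu' : ∀ t, HasDerivAt u' (u'' t) t)
    (hv : ∀ t, HasDerivAt v (v' t) t) (hv' : ∀ t, HasDerivAt v' (v'' t) t)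
    (heq1 : ∀ t, u'' t + u' t + lam * u t + c * v t = 0)
    (heq2 : ∀ t, v'' t + lam * v t + c * u t = 0)
    (hE : ∀ t : ℝ,
      (1/2) * ((u' t)^2 + (v' t)^2 + lam * ((u t)^2 + (v t)^2)) + c * u t * v t
      = (1/2) * ((u' 0)^2 + (v' 0)^2 + lam * ((u 0)^2 + (v 0)^2)) + c * u 0 * v 0) :
    ∀ t, u t = 0 ∧ v t = 0 := by
  have hcne : c ≠ 0 := by
    intro h; rw [h, abs_zero] at hc; exact lt_irrefl 0 hc
  -- The energy has derivative -(u' t)^2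
  have key : ∀ t, HasDerivAt
      (fun t => (1/2) * ((u' t)^2 + (v' t)^2 + lam * ((u t)^2 + (v t)^2)) + c * u t * v t)
      (-(u' t)^2) t := by
    intro t
    have H := ((((((hu' t).pow 2).add ((hv' t).pow 2)).add
        ((((hu t).pow 2).add ((hv t).pow 2)).const_mul lam)).const_mul (1/2)).add
        (((hu t).const_mul c).mul (hv t)))
    refine H.congr_deriv (Eq.symm ?_)
    have e1 := heq1 t
    have e2 := heq2 t
    push_cast
    linear_combination (-(u' t)) * e1 + (-(v' t)) * e2
  -- Energy is constant, so derivative is 0, so u' ≡ 0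
  have hu'0 : ∀ t, u' t = 0 := by
    intro t
    have hfun : (fun t => (1/2) * ((u' t)^2 + (v' t)^2 + lam * ((u t)^2 + (v t)^2)) + c * u t * v t)
        = fun _ => (1/2) * ((u' 0)^2 + (v' 0)^2 + lam * ((u 0)^2 + (v 0)^2)) + c * u 0 * v 0 :=
      funext hE
    have h := key t
    rw [hfun] at h
    have h0 : -(u' t)^2 = 0 := h.unique (hasDerivAt_const _ _)
    nlinarith [sq_nonneg (u' t)]
  have hufun : u' = fun _ => (0:ℝ) := funext hu'0
  have hu''0 : ∀ t, u'' t = 0 := by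
    intro t
    have h := hu' t
    rw [hufun] at h
    exact h.unique (hasDerivAt_const _ _)
  -- u is constant
  have huconst : ∀ t, u t = u 0 := by
    intro t
    have : ∀ s, HasDerivAt u 0 s := by intro s; have := hu s; rw [hu'0 s] at this; exact this
    exact is_const_of_deriv_eq_zero (fun s => (this s).differentiableAt)
      (fun s => (this s).deriv) t 0
  -- From eq1: lam * u t + c * v t = 0
  have halg1 : ∀ t, lam * u t + c * v t = 0 := by
    intro t
    have := heq1 t
    rw [hu'0 t, hu''0 t] at this
    linarith
  -- v is constant
  have hvconst : ∀ t, v t = v 0 := by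
    intro t
    have h1 := halg1 t
    have h2 := halg1 0
    rw [huconst t] at h1
    have : c * v t = c * v 0 := by linarith
    exact mul_left_cancel₀ hcne this
  have hv'0 : ∀ t, v' t = 0 := by
    intro t
    have h := hv t
    rw [funext hvconst] at h
    exact h.unique (hasDerivAt_const _ _)
  have hv''0 : ∀ t, v'' t = 0 := by
    intro t
    have h := hv' t
    rw [funext hv'0] at h
    exact h.unique (hasDerivAt_const _ _)
  have halg2 : ∀ t, lam * v t + c * u t = 0 := by
    intro t
    have := heq2 t
    rw [hv''0 t] at this
    linarith
  intro t
  have h1 := halg1 t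
  have h2 := halg2 t
  have hc2 : c^2 < lam^2 := by nlinarith [sq_abs c, hc, hclam, hlam]
  have hne : lam^2 - c^2 ≠ 0 := by nlinarith
  have hu0 : (lam^2 - c^2) * u t = 0 := by linear_combination lam * h1 - c * h2
  have hv0 : (lam^2 - c^2) * v t = 0 := by linear_combination lam * h2 - c * h1
  exact ⟨by simpa [hne] using hu0, by simpa [hne] using hv0⟩
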